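/- Let A ∈ ℝ^{d×d} have a non-real eigenvalue λ with |λ| = r > 0 and arg λ/(2π) rational and positive. Then there exist x, y ∈ ℝ^d with xᵀ Aⁿ y = rⁿ · sin(n · arg λ) for all n ∈ ℕ; consequently the set { n : xᵀ Aⁿ y = 0 } equals Nℕ for some integer N ≥ 2 and has asymptotic density 1/N ∈ (0,1). -/

import Mathlib

open scoped Classical

lemma aux_rat_int (s : ℚ) (n : ℕ) : (∃ k : ℤ, (k : ℚ) = (n : ℚ) * s) ↔ s.den ∣ n := by
  have hden : ((s.den : ℚ)) ≠ 0 := by exact_mod_cast s.den_nz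
  have hs : s * (s.den : ℚ) = (s.num : ℚ) := Rat.mul_den_eq_num s
  constructor
  · rintro ⟨k, hk⟩
    have h : (k : ℚ) * s.den = (n : ℚ) * s.num := by
      rw [hk, mul_assoc, hs]
    have h2 : (k : ℤ) * s.den = (n : ℤ) * s.num := by exact_mod_cast h
    have h3 : (s.den : ℤ) ∣ (n : ℤ) * s.num := ⟨k, by linarith [h2]⟩
    have h4 : s.den ∣ n * s.num.natAbs := by
      have := Int.natAbs_dvd_natAbs.mpr h3
      simpa [Int.natAbs_mul] using this
    exact (Nat.Coprime.dvd_of_dvd_mul_right (s.reduced.symm) h4)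
  · rintro ⟨m, rfl⟩
    refine ⟨s.num * m, ?_⟩
    push_cast
    calc (s.num : ℚ) * m = s * s.den * m := by rw [hs]
      _ = (s.den : ℚ) * m * s := by ring

lemma aux_sin_iff (θ : ℝ) (q : ℚ) (harg : θ = 2 * Real.pi * q) (n : ℕ) :
    Real.sin (n * θ) = 0 ↔ (2 * q).den ∣ n := by
  have hπ : Real.pi ≠ 0 := Real.pi_ne_zero
  rw [harg, Real.sin_eq_zero_iff, ← aux_rat_int (2 * q) n]
  constructor
  · rintro ⟨k, hk⟩
    refine ⟨k, ?_⟩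
    have : (k : ℝ) = (n : ℝ) * ((2 * q : ℚ) : ℝ) := by
      have h2 : (k : ℝ) * Real.pi = ((n : ℝ) * ((2 * q : ℚ) : ℝ)) * Real.pi := by
        rw [hk]; push_cast; ring
      exact mul_right_cancel₀ hπ h2
    exact_mod_cast this
  · rintro ⟨k, hk⟩
    refine ⟨k, ?_⟩
    have : (k : ℝ) = (n : ℝ) * ((2 * q : ℚ) : ℝ) := by exact_mod_cast hk
    rw [this]; push_cast; ring

lemma aux_card (N : ℕ) (P : ℕ → Prop) (hP : ∀ n, 1 ≤ n → (P n ↔ N ∣ n)) (M : ℕ) :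
    ((Finset.Icc 1 M).filter fun n => P n).card = M / N := by
  have h1 : (Finset.Icc 1 M).filter (fun n => P n)
      = (Finset.Icc 1 M).filter (fun n => N ∣ n) := by
    apply Finset.filter_congr
    intro n hn
    simp only [Finset.mem_Icc] at hn
    simpa using hP n hn.1
  rw [h1, show Finset.Icc 1 M = Finset.Ioc 0 M from by rw [← Finset.Icc_add_one_left_eq_Ioc, zero_add]]
  exact Nat.Ioc_filter_dvd_card_eq_div M N

lemma aux_tendsto (N : ℕ) (hN : 2 ≤ N) :
    Filter.Tendsto (fun M : ℕ => ((M / N : ℕ) : ℝ) / M) Filter.atTop (nhds (1 / N)) := by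
  have hN0 : (N : ℝ) ≠ 0 := by positivity
  have h2 : Filter.Tendsto (fun M : ℕ => ((M % N : ℕ) : ℝ) / (N * M)) Filter.atTop (nhds 0) := by
    apply squeeze_zero (fun M => by positivity) (g := fun M : ℕ => 1 / (M : ℝ))
    · intro M
      rcases Nat.eq_zero_or_pos M with h | h
      · simp [h]
      · rw [div_le_div_iff₀ (by positivity) (by exact_mod_cast h)]
        have : ((M % N : ℕ) : ℝ) ≤ N := by
          exact_mod_cast (Nat.mod_lt M (by omega)).le
        have hM1 : (1:ℝ) ≤ M := by exact_mod_cast h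
        nlinarith
    · exact tendsto_one_div_atTop_nhds_zero_nat
  have h3 : Filter.Tendsto (fun M : ℕ => 1 / (N : ℝ) - ((M % N : ℕ) : ℝ) / (N * M))
      Filter.atTop (nhds (1 / N)) := by
    simpa using tendsto_const_nhds.sub h2
  apply h3.congr'
  filter_upwards [Filter.eventually_ge_atTop 1] with M hM
  have hM0 : (M : ℝ) ≠ 0 := by positivity
  have hdm : (N : ℝ) * ((M / N : ℕ) : ℝ) + ((M % N : ℕ) : ℝ) = M := by
    exact_mod_cast Nat.div_add_mod M N
  field_simp
  nlinarith [hdm]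

lemma aux_pow_im (μ : ℂ) (r : ℝ) (hμabs : ‖μ‖ = r) (n : ℕ) :
    (μ ^ n).im = r ^ n * Real.sin (n * Complex.arg μ) := by
  have h := Complex.norm_mul_exp_arg_mul_I μ
  rw [hμabs] at h
  conv_lhs => rw [← h, mul_pow, ← Complex.exp_nat_mul]
  have : (n : ℂ) * (Complex.arg μ * Complex.I) = ((n * Complex.arg μ : ℝ) : ℂ) * Complex.I := by
    push_cast; ring
  rw [this, ← Complex.ofReal_pow, Complex.im_ofReal_mul, Complex.exp_ofReal_mul_I_im]

lemma aux_exists_x {d : ℕ} (u v : Fin d → ℝ) (key : ∀ c : ℝ, u ≠ c • v) :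
    ∃ x : Fin d → ℝ, dotProduct x u = 1 ∧ dotProduct x v = 0 := by
  set c : ℝ := if dotProduct v v = 0 then 0
    else dotProduct u v / dotProduct v v with hc
  set u' : Fin d → ℝ := u - c • v with hu'
  have hu'v : dotProduct u' v = 0 := by
    rw [hu', sub_dotProduct, smul_dotProduct]
    by_cases h : dotProduct v v = 0
    · have hv0 : v = 0 := dotProduct_self_eq_zero.mp h
      simp [hv0]
    · rw [hc, if_neg h, smul_eq_mul, div_mul_cancel₀ _ h, sub_self]
  have hu'0 : u' ≠ 0 := by
    intro h
    exact key c (by rwa [hu', sub_eq_zero] at h)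
  have hdu' : 0 < dotProduct u' u' := by
    rcases lt_or_eq_of_le (Finset.sum_nonneg fun i _ => mul_self_nonneg (u' i) :
        (0:ℝ) ≤ dotProduct u' u') with h | h
    · exact h
    · exact absurd (dotProduct_self_eq_zero.mp h.symm) hu'0
  refine ⟨(dotProduct u' u')⁻¹ • u', ?_, ?_⟩
  · rw [smul_dotProduct]
    have : dotProduct u' u = dotProduct u' u' := by
      have huu : u = u' + c • v := by rw [hu']; abel
      rw [huu, dotProduct_add, dotProduct_smul, hu'v]
      simp
    rw [this, smul_eq_mul, inv_mul_cancel₀ (ne_of_gt hdu')]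
  · rw [smul_dotProduct, hu'v, smul_zero]

theorem exists_zero_set_lattice_of_rational_angle (d : ℕ) (A : Matrix (Fin d) (Fin d) ℝ)
    (μ : ℂ) (r : ℝ) (hr : 0 < r) (hμim : μ.im ≠ 0) (hμabs : ‖μ‖ = r)
    (hμeig : Module.End.HasEigenvalue (Matrix.toLin' (A.map (Complex.ofReal))) μ)
    (hθ : ∃ q : ℚ, 0 < q ∧ Complex.arg μ = 2 * Real.pi * q) :
    ∃ x y : Fin d → ℝ,
      (∀ n : ℕ, 1 ≤ n →
        dotProduct x ((A ^ n).mulVec y) = r ^ n * Real.sin (n * Complex.arg μ)) ∧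
      ∃ N : ℕ, 2 ≤ N ∧
        ({n : ℕ | 1 ≤ n ∧ dotProduct x ((A ^ n).mulVec y) = 0}
          = {n : ℕ | 1 ≤ n ∧ N ∣ n}) ∧
        Filter.Tendsto
          (fun M : ℕ =>
            (((Finset.Icc 1 M).filter fun n => dotProduct x ((A ^ n).mulVec y) = 0).card : ℝ) / M)
          Filter.atTop (nhds (1 / N)) := by
  obtain ⟨w, hw⟩ := hμeig.exists_hasEigenvector
  have hw0 : w ≠ 0 := hw.right
  have hwe : (A.map Complex.ofReal).mulVec w = μ • w := by
    have := hw.apply_eq_smul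
    simpa [Matrix.toLin'_apply] using this
  -- powers
  have hpow : ∀ n : ℕ, ((A ^ n).map Complex.ofReal).mulVec w = μ ^ n • w := by
    have hmap : ∀ n : ℕ, (A ^ n).map Complex.ofReal = (A.map Complex.ofReal) ^ n := by
      intro n
      have : A.map Complex.ofReal = Complex.ofRealHom.mapMatrix A := rfl
      rw [this, ← map_pow]
      rfl
    intro n
    induction n with
    | zero => simp
    | succ n ih =>
      rw [hmap] at ih ⊢
      rw [pow_succ', pow_succ', ← Matrix.mulVec_mulVec, ih, Matrix.mulVec_smul, hwe,
        smul_smul, mul_comm]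
  set u : Fin d → ℝ := fun i => (w i).re with hu
  set v : Fin d → ℝ := fun i => (w i).im with hv
  -- key linear independence fact
  have key : ∀ c : ℝ, u ≠ c • v := by
    intro c hc
    set vc : Fin d → ℂ := fun i => ((w i).im : ℂ) with hvc
    have hwv : w = (c + Complex.I) • vc := by
      funext i
      have : (w i).re = c * (w i).im := congrFun hc i
      apply Complex.ext <;> simp [hvc, this, mul_comm]
    have hcI : (c + Complex.I) ≠ 0 := by
      intro h; have := congrArg Complex.im h; simp at this
    have hv0 : vc ≠ 0 := by
      intro h; apply hw0; rw [hwv, h, smul_zero]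
    have hve : (A.map Complex.ofReal).mulVec vc = μ • vc := by
      have h := hwe
      rw [hwv, Matrix.mulVec_smul, smul_comm] at h
      exact smul_right_injective _ hcI h
    have hzero : ∀ i, (w i).im = 0 := by
      intro i
      have h2 := congrArg Complex.im (congrFun hve i)
      simp only [Matrix.mulVec, dotProduct, Complex.im_sum, Complex.mul_im,
        Pi.smul_apply, smul_eq_mul, Matrix.map_apply, Complex.ofReal_re, Complex.ofReal_im,
        zero_mul, add_zero, mul_zero, Finset.sum_const_zero, hvc] at h2
      rw [zero_add] at h2
      rcases mul_eq_zero.mp h2.symm with h | h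
      · exact absurd h hμim
      · exact h
    apply hv0; funext i; simp [hvc, hzero i]
  obtain ⟨x, hxu, hxv⟩ := aux_exists_x u v key
  -- the image of v under A^n
  have hAnv : ∀ n : ℕ, (A ^ n).mulVec v = (μ ^ n).im • u + (μ ^ n).re • v := by
    intro n
    funext i
    have h1 := congrArg Complex.im (congrFun (hpow n) i)
    simp only [Matrix.mulVec, dotProduct, Complex.im_sum, Complex.mul_im,
      Pi.smul_apply, smul_eq_mul, Matrix.map_apply, Complex.ofReal_re, Complex.ofReal_im,
      zero_mul, add_zero, mul_zero] at h1
    show dotProduct ((A ^ n) i) v = _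
    simp only [dotProduct, hv, Pi.add_apply, Pi.smul_apply, smul_eq_mul, hu]
    rw [h1]; ring
  -- the main formula
  have hform : ∀ n : ℕ, dotProduct x ((A ^ n).mulVec v)
      = r ^ n * Real.sin (n * Complex.arg μ) := by
    intro n
    rw [hAnv n, dotProduct_add, dotProduct_smul, dotProduct_smul,
      hxu, hxv]
    simp [aux_pow_im μ r hμabs n]
  refine ⟨x, v, fun n _ => hform n, ?_⟩
  obtain ⟨q, hq0, harg⟩ := hθ
  set N : ℕ := (2 * q).den with hN
  have hsin : ∀ n : ℕ, Real.sin (n * Complex.arg μ) = 0 ↔ N ∣ n :=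
    fun n => aux_sin_iff (Complex.arg μ) q harg n
  have hsinarg : Real.sin (Complex.arg μ) ≠ 0 := by
    rw [Complex.sin_arg]
    intro h
    rcases div_eq_zero_iff.mp h with h | h
    · exact hμim h
    · rw [hμabs] at h; exact (ne_of_gt hr) h
  have hN2 : 2 ≤ N := by
    have hN1 : 1 ≤ N := (2 * q).pos
    by_contra h
    push_neg at h
    have hN1' : N = 1 := by omega
    exact absurd ((hsin 1).mpr (by rw [hN1'] : N ∣ 1)) (by simpa using hsinarg)
  have hzero : ∀ n : ℕ, 1 ≤ n →
      (dotProduct x ((A ^ n).mulVec v) = 0 ↔ N ∣ n) := by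
    intro n hn
    rw [hform n, mul_eq_zero]
    constructor
    · rintro (h | h)
      · exact absurd h (by positivity)
      · exact (hsin n).mp h
    · intro h
      exact Or.inr ((hsin n).mpr h)
  refine ⟨N, hN2, ?_, ?_⟩
  · ext n
    simp only [Set.mem_setOf_eq]
    exact and_congr_right fun hn => hzero n hn
  · have hcard := aux_card N (fun n => dotProduct x ((A ^ n).mulVec v) = 0) hzero
    have : (fun M : ℕ =>
        (((Finset.Icc 1 M).filter fun n => dotProduct x ((A ^ n).mulVec v) = 0).card : ℝ) / M)
        = fun M : ℕ => ((M / N : ℕ) : ℝ) / M := by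
      funext M; rw [hcard M]
    rw [this]
    exact aux_tendsto N hN2
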